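/- arXiv:math/0004139 — 2 statements merged into one kernel-verified Lean document; each statement's English description precedes it below -/
import Mathlib

section
/- Let A be a unital ring and N ⊆ A a subring containing the unit. Call a left A-module P projective relative to N if for every cochain complex C^• of left A-modules that is homotopy equivalent to the zero complex as a complex of left N-modules, the complex with degree-n component Hom_A(P, C^n) (and differential f ↦ d_C ∘ f) is acyclic. Then every cochain complex S^• of left A-modules that is bounded from above (S^n = 0 for all n greater than some integer n₁) and all of whose terms S^n are projective relative to N is K-projective relative to N: for every cochain complex C^• of left A-modules that is homotopy equivalent to the zero complex as a complex of left N-modules, the hom-complex hom_A^•(S^•, C^•) is acyclic. -/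
open CategoryTheory

/-- The hom-complex `hom_R^•(K, L)` (degree-`n` component `∏_p Hom_R(K^p, L^{p+n})`,
differential `d f = d_L ∘ f − (−1)^n f ∘ d_K`) is acyclic. -/
def HomComplexAcyclic {R : Type} [Ring R] (K L : CochainComplex (ModuleCat R) ℤ) : Prop :=
  ∀ (n : ℤ) (z : CochainComplex.HomComplex.Cochain K L n),
    CochainComplex.HomComplex.δ n (n + 1) z = 0 →
      ∃ w : CochainComplex.HomComplex.Cochain K L (n - 1),
        CochainComplex.HomComplex.δ (n - 1) n w = z

variable (A : Type) [Ring A] (N : Subring A)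

/-- A complex of left `A`-modules is homotopy equivalent to the zero complex as a complex of
left `N`-modules: its identity map is null-homotopic through `N`-linear homotopies. -/
def NullHomotopicOverSubring (C : CochainComplex (ModuleCat A) ℤ) : Prop :=
  Nonempty (Homotopy
    (𝟙 (((ModuleCat.restrictScalars N.subtype).mapHomologicalComplex
      (ComplexShape.up ℤ)).obj C)) 0)

/-- A left `A`-module `P` is projective relative to `N` if for every cochain complex `C` of
left `A`-modules that is homotopy equivalent to zero as a complex of left `N`-modules, the
complex with degree-`n` component `Hom_A(P, C^n)` and differential `f ↦ d_C ∘ f` is acyclic. -/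
def RelativelyProjective (P : ModuleCat A) : Prop :=
  ∀ C : CochainComplex (ModuleCat A) ℤ, NullHomotopicOverSubring A N C →
    ∀ (n : ℤ) (f : P ⟶ C.X n), f ≫ C.d n (n + 1) = 0 →
      ∃ g : P ⟶ C.X (n - 1), g ≫ C.d (n - 1) n = f

namespace RelKProjAux

open CochainComplex.HomComplex

lemma hom_eq_zero_of_subsingleton {R : Type} [Ring R] {M Y : ModuleCat R}
    (h : Subsingleton M) (f : M ⟶ Y) : f = 0 := by
  ext x
  rw [h.elim x 0]
  simp

/-- Key step: if `g'` satisfies the recursion relation at `p + 1`, then the candidate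
map at `p` is killed by the differential. -/
lemma key {A : Type} [Ring A] (S C : CochainComplex (ModuleCat A) ℤ)
    (n : ℤ) (z : Cochain S C n) (hz : δ n (n + 1) z = 0)
    (p : ℤ) (g' : S.X (p + 1) ⟶ C.X (p + n)) (g'' : S.X (p + 1 + 1) ⟶ C.X (p + n + 1))
    (hg' : g' ≫ C.d (p + n) (p + n + 1) =
      z.v (p + 1) (p + n + 1) (by omega) -
        n.negOnePow • (S.d (p + 1) (p + 1 + 1) ≫ g'')) :
    (z.v p (p + n) rfl - n.negOnePow • (S.d p (p + 1) ≫ g')) ≫ C.d (p + n) (p + n + 1) = 0 := by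
  have h1 := Cochain.congr_v hz p (p + n + 1) (by omega)
  rw [δ_v n (n + 1) rfl z p (p + n + 1) (by omega) (p + n) (p + 1) (by omega) rfl,
    Cochain.zero_v] at h1
  have h2 : z.v p (p + n) rfl ≫ C.d (p + n) (p + n + 1) =
      n.negOnePow • (S.d p (p + 1) ≫ z.v (p + 1) (p + n + 1) (by omega)) := by
    have h3 := eq_neg_of_add_eq_zero_left h1
    rw [h3, Int.negOnePow_succ, Units.neg_smul, neg_neg]
  simp only [Preadditive.sub_comp]
  rw [h2, Linear.units_smul_comp, Category.assoc, hg']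
  simp only [Preadditive.comp_sub, Linear.comp_units_smul, smul_sub, smul_smul,
    Int.units_mul_self, one_smul]
  rw [← Category.assoc (S.d p (p + 1)), HomologicalComplex.d_comp_d]
  simp

/-- The inductively constructed data: at each `p`, a map
`g : S.X p ⟶ C.X (p + n - 1)` together with the map at level `p + 1`
(suitably reindexed) satisfying the recursion relation. -/
noncomputable def aux {A : Type} [Ring A] (S C : CochainComplex (ModuleCat A) ℤ)
    (n n₁ : ℤ) (z : Cochain S C n) (hz : δ n (n + 1) z = 0)
    (hbdd : ∀ p : ℤ, n₁ < p → Subsingleton (S.X p))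
    (hlift : ∀ (p : ℤ) (f : S.X p ⟶ C.X (p + n)), f ≫ C.d (p + n) (p + n + 1) = 0 →
      ∃ g : S.X p ⟶ C.X (p + n - 1), g ≫ C.d (p + n - 1) (p + n) = f) :
    ∀ p : ℤ,
    Σ' (g : S.X p ⟶ C.X (p + n - 1)) (g' : S.X (p + 1) ⟶ C.X (p + n)),
      g ≫ C.d (p + n - 1) (p + n) =
        z.v p (p + n) rfl - n.negOnePow • (S.d p (p + 1) ≫ g') := fun p =>
  if h : n₁ < p then
    ⟨0, 0, by
      rw [hom_eq_zero_of_subsingleton (hbdd p h) (z.v p (p + n) rfl)]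
      simp⟩
  else
    let prev := aux S C n n₁ z hz hbdd hlift (p + 1)
    let g' : S.X (p + 1) ⟶ C.X (p + n) :=
      prev.1 ≫ (C.XIsoOfEq (show p + 1 + n - 1 = p + n by omega)).hom
    have hg' : g' ≫ C.d (p + n) (p + n + 1) =
        z.v (p + 1) (p + n + 1) (by omega) -
          n.negOnePow • (S.d (p + 1) (p + 1 + 1) ≫
            (prev.2.1 ≫ (C.XIsoOfEq (show p + 1 + n = p + n + 1 by omega)).hom)) := by
      have hrel := prev.2.2
      have hd : C.d (p + 1 + n - 1) (p + 1 + n) ≫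
          (C.XIsoOfEq (show p + 1 + n = p + n + 1 by omega)).hom =
          C.d (p + 1 + n - 1) (p + n + 1) :=
        HomologicalComplex.d_comp_XIsoOfEq_hom C _ _
      calc g' ≫ C.d (p + n) (p + n + 1)
          = prev.1 ≫ ((C.XIsoOfEq (show p + 1 + n - 1 = p + n by omega)).hom ≫
              C.d (p + n) (p + n + 1)) := by
            dsimp only [g']
            rw [Category.assoc]
        _ = prev.1 ≫ C.d (p + 1 + n - 1) (p + n + 1) := by
              rw [HomologicalComplex.XIsoOfEq_hom_comp_d]
        _ = prev.1 ≫ (C.d (p + 1 + n - 1) (p + 1 + n) ≫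
              (C.XIsoOfEq (show p + 1 + n = p + n + 1 by omega)).hom) := by rw [hd]
        _ = (z.v (p + 1) (p + 1 + n) (by omega) -
              n.negOnePow • (S.d (p + 1) (p + 1 + 1) ≫ prev.2.1)) ≫
              (C.XIsoOfEq (show p + 1 + n = p + n + 1 by omega)).hom := by
              rw [← Category.assoc]
              exact congrArg (· ≫ _) hrel
        _ = _ := by
              simp only [Preadditive.sub_comp, Linear.units_smul_comp, Category.assoc,
                Cochain.v_comp_XIsoOfEq_hom]
    have hf := key S C n z hz p g' _ hg'
    ⟨(hlift p _ hf).choose, g', (hlift p _ hf).choose_spec⟩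
termination_by p => (n₁ + 1 - p).toNat
decreasing_by
  simp only [not_lt] at h
  omega

lemma aux_snd {A : Type} [Ring A] (S C : CochainComplex (ModuleCat A) ℤ)
    (n n₁ : ℤ) (z : Cochain S C n) (hz : δ n (n + 1) z = 0)
    (hbdd : ∀ p : ℤ, n₁ < p → Subsingleton (S.X p))
    (hlift : ∀ (p : ℤ) (f : S.X p ⟶ C.X (p + n)), f ≫ C.d (p + n) (p + n + 1) = 0 →
      ∃ g : S.X p ⟶ C.X (p + n - 1), g ≫ C.d (p + n - 1) (p + n) = f)
    (p : ℤ) :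
    (aux S C n n₁ z hz hbdd hlift p).2.1 =
      (aux S C n n₁ z hz hbdd hlift (p + 1)).1 ≫
        (C.XIsoOfEq (show p + 1 + n - 1 = p + n by omega)).hom := by
  by_cases h : n₁ < p
  · conv_lhs => rw [aux]
    rw [dif_pos h]
    rw [hom_eq_zero_of_subsingleton (hbdd (p + 1) (by omega))
      (aux S C n n₁ z hz hbdd hlift (p + 1)).1]
    simp
  · conv_lhs => rw [aux]
    rw [dif_neg h]

end RelKProjAux

/-- A bounded-above cochain complex of left `A`-modules, all of whose terms are projective
relative to `N`, is K-projective relative to `N`: for every cochain complex `C` of left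
`A`-modules that is homotopy equivalent to zero as a complex of left `N`-modules, the
hom-complex `hom_A^•(S, C)` is acyclic. -/
theorem bounded_above_complex_of_relative_projectives_is_relatively_K_projective
    (S : CochainComplex (ModuleCat A) ℤ)
    (n₁ : ℤ) (hbdd : ∀ n : ℤ, n₁ < n → Subsingleton (S.X n))
    (hproj : ∀ n : ℤ, RelativelyProjective A N (S.X n)) :
    ∀ C : CochainComplex (ModuleCat A) ℤ, NullHomotopicOverSubring A N C →
      HomComplexAcyclic S C := by
  intro C hC n z hz
  have hlift : ∀ (p : ℤ) (f : S.X p ⟶ C.X (p + n)), f ≫ C.d (p + n) (p + n + 1) = 0 →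
      ∃ g : S.X p ⟶ C.X (p + n - 1), g ≫ C.d (p + n - 1) (p + n) = f :=
    fun p f hf => hproj p C hC (p + n) f hf
  set w : CochainComplex.HomComplex.Cochain S C (n - 1) :=
    CochainComplex.HomComplex.Cochain.mk (fun p q hpq =>
      (RelKProjAux.aux S C n n₁ z hz hbdd hlift p).1 ≫
        (C.XIsoOfEq (show p + n - 1 = q by omega)).hom) with hw
  refine ⟨w, CochainComplex.HomComplex.Cochain.ext _ _ (fun p q hpq => ?_)⟩
  obtain rfl : q = p + n := by omega
  rw [CochainComplex.HomComplex.δ_v (n - 1) n (by omega) w p (p + n) hpq (p + n - 1) (p + 1)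
    (by omega) rfl]
  have hv1 : w.v p (p + n - 1) (by omega) =
      (RelKProjAux.aux S C n n₁ z hz hbdd hlift p).1 ≫
        (C.XIsoOfEq (show p + n - 1 = p + n - 1 by omega)).hom := rfl
  have hv2 : w.v (p + 1) (p + n) (by omega) =
      (RelKProjAux.aux S C n n₁ z hz hbdd hlift (p + 1)).1 ≫
        (C.XIsoOfEq (show p + 1 + n - 1 = p + n by omega)).hom := rfl
  rw [hv1, hv2, ← RelKProjAux.aux_snd S C n n₁ z hz hbdd hlift p, Category.assoc,
    HomologicalComplex.XIsoOfEq_hom_comp_d]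
  have h5 := (RelKProjAux.aux S C n n₁ z hz hbdd hlift p).2.2
  simp only [h5]
  have := CochainComplex.HomComplex.Cochain.congr_v (rfl :
    z = z) p (p + n) hpq
  abel_nf
end

section
/- Let R be a unital ring. For each (p,q) ∈ ℤ² let X^{p,q} be an R-module, and let d₁ : X^{p,q} → X^{p+1,q} and d₂ : X^{p,q} → X^{p,q+1} be R-linear maps with d₁ ∘ d₁ = 0. Form X^n := ∏_{p∈ℤ} X^{−p, p+n} with the map d := d₁ + d₂ (defined componentwise), and assume d ∘ d = 0, so that (X^•, d) is a cochain complex of R-modules. Suppose that (a) for every q ∈ ℤ the complex (X^{•,q}, d₁) is acyclic (exact at every spot); and (b) X^{p,q} = 0 whenever q < 0, i.e. all nonzero components lie in the upper half of the (p,q)-plane. Then the complex X^• is acyclic: H^n(X^•) = 0 for all n ∈ ℤ. -/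
section AlmostDoubleComplex

variable (R : Type) [Ring R]
variable (X : ℤ → ℤ → Type) [∀ p q, AddCommGroup (X p q)] [∀ p q, Module R (X p q)]

/-- Transport along an equality of the first index. -/
def cast₁ {p p' q : ℤ} (h : p = p') : X p q →ₗ[R] X p' q := by subst h; exact LinearMap.id

/-- Transport along an equality of the second index. -/
def cast₂ {p q q' : ℤ} (h : q = q') : X p q →ₗ[R] X p q' := by subst h; exact LinearMap.id

/-- The degree-`n` component of the product-totalization of the grid `X`:
`X^n = ∏_{p+q=n} X^{p,q}` (equivalently `∏_{p} X^{-p,p+n}`), here recorded as the product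
over the first index `p` of the modules `X^{p,n-p}`. -/
def Tot (n : ℤ) : Type := ∀ p : ℤ, X p (n - p)

instance (n : ℤ) : AddCommGroup (Tot X n) :=
  inferInstanceAs (AddCommGroup (∀ p : ℤ, X p (n - p)))

variable (d₁ : ∀ p q : ℤ, X p q →ₗ[R] X (p + 1) q)
variable (d₂ : ∀ p q : ℤ, X p q →ₗ[R] X p (q + 1))

/-- The total differential `d = d₁ + d₂` on the product-totalization, defined componentwise. -/
def totD (n : ℤ) (x : Tot X n) : Tot X (n + 1) := fun p =>
  (cast₂ R X (by omega : n - (p - 1) = n + 1 - p)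
      ((cast₁ R X (by omega : (p - 1) + 1 = p)) (d₁ (p - 1) (n - (p - 1)) (x (p - 1)))))
    + cast₂ R X (by omega : (n - p) + 1 = n + 1 - p) (d₂ p (n - p) (x p))

end AlmostDoubleComplex

section Aux

variable (R : Type) [Ring R]
variable (X : ℤ → ℤ → Type) [∀ p q, AddCommGroup (X p q)] [∀ p q, Module R (X p q)]

def cst {p q p' q' : ℤ} (h1 : p = p') (h2 : q = q') : X p q →ₗ[R] X p' q' := by
  subst h1; subst h2; exact LinearMap.id

@[simp] lemma cst_id {p q : ℤ} (h1 : p = p) (h2 : q = q) (v : X p q) :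
    cst R X h1 h2 v = v := rfl

@[simp] lemma cst_cst {p q p' q' p'' q'' : ℤ} (h1 : p = p') (h2 : q = q')
    (h1' : p' = p'') (h2' : q' = q'') (v : X p q) :
    cst R X h1' h2' (cst R X h1 h2 v) = cst R X (h1.trans h1') (h2.trans h2') v := by
  subst h1; subst h2; subst h1'; subst h2'; rfl

@[simp] lemma cst_eq_zero_iff {p q p' q' : ℤ} (h1 : p = p') (h2 : q = q') (v : X p q) :
    cst R X h1 h2 v = 0 ↔ v = 0 := by subst h1; subst h2; exact Iff.rfl

lemma cst_eq_cst_iff {p q p' q' P Q : ℤ} (h1 : p = P) (h2 : q = Q) (h1' : p' = P) (h2' : q' = Q)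
    (a : X p q) (b : X p' q') :
    cst R X h1 h2 a = cst R X h1' h2' b ↔ a = cst R X (h1'.trans h1.symm) (h2'.trans h2.symm) b := by
  subst h1; subst h2; subst h1'; subst h2'; exact Iff.rfl

lemma cast₁_eq {p p' q : ℤ} (h : p = p') :
    (cast₁ R X (q := q) h) = cst R X h rfl := by subst h; rfl

lemma cast₂_eq {p q q' : ℤ} (h : q = q') :
    (cast₂ R X (p := p) h) = cst R X rfl h := by subst h; rfl

variable (d₁ : ∀ p q : ℤ, X p q →ₗ[R] X (p + 1) q)
variable (d₂ : ∀ p q : ℤ, X p q →ₗ[R] X p (q + 1))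

lemma d₁_cst {p q p' q' : ℤ} (h1 : p = p') (h2 : q = q') (v : X p q) :
    d₁ p' q' (cst R X h1 h2 v) = cst R X (by rw [h1]) h2 (d₁ p q v) := by
  subst h1; subst h2; rfl

lemma d₂_cst {p q p' q' : ℤ} (h1 : p = p') (h2 : q = q') (v : X p q) :
    d₂ p' q' (cst R X h1 h2 v) = cst R X h1 (by rw [h2]) (d₂ p q v) := by
  subst h1; subst h2; rfl

def delta (n p : ℤ) (v : X p (n - p)) : Tot X n := fun p' =>
  if h : p = p' then cst R X h (by rw [h]) v else 0

lemma delta_eq (n p : ℤ) (v : X p (n - p)) {p' : ℤ} (h : p = p') :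
    delta R X n p v p' = cst R X h (by rw [h]) v := by
  subst h; simp [delta]

lemma delta_ne (n p : ℤ) (v : X p (n - p)) {p' : ℤ} (h : p ≠ p') :
    delta R X n p v p' = 0 := dif_neg h

lemma d₂_d₂ (hdd : ∀ (n : ℤ) (x : Tot X n), totD R X d₁ d₂ (n + 1) (totD R X d₁ d₂ n x) = 0)
    (p q : ℤ) (v : X p q) : d₂ p (q + 1) (d₂ p q v) = 0 := by
  have H : totD R X d₁ d₂ (p + q + 1) (totD R X d₁ d₂ (p + q)
      (delta R X (p + q) p (cst R X rfl (by omega) v))) p = 0 :=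
    congrFun (hdd (p + q) (delta R X (p + q) p (cst R X rfl (by omega) v))) p
  simp only [totD] at H
  rw [delta_ne R X _ _ _ (by omega : p ≠ p - 1 - 1),
      delta_ne R X _ _ _ (by omega : p ≠ p - 1),
      delta_eq R X _ _ _ (rfl : p = p)] at H
  simp only [map_zero, zero_add, add_zero, cast₁_eq, cast₂_eq, cst_cst, cst_id,
    d₁_cst R X d₁, d₂_cst R X d₂, cst_eq_zero_iff] at H
  exact H

lemma d₁_d₂ (hdd : ∀ (n : ℤ) (x : Tot X n), totD R X d₁ d₂ (n + 1) (totD R X d₁ d₂ n x) = 0)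
    (p q : ℤ) (v : X p q) :
    d₁ p (q + 1) (d₂ p q v) + d₂ (p + 1) q (d₁ p q v) = 0 := by
  have H : totD R X d₁ d₂ (p + q + 1) (totD R X d₁ d₂ (p + q)
      (delta R X (p + q) p (cst R X rfl (by omega) v))) (p + 1) = 0 :=
    congrFun (hdd (p + q) (delta R X (p + q) p (cst R X rfl (by omega) v))) (p + 1)
  simp only [totD] at H
  rw [delta_ne R X _ _ _ (by omega : p ≠ p + 1 - 1 - 1),
      delta_eq R X _ _ _ (by omega : p = p + 1 - 1),
      delta_ne R X _ _ _ (by omega : p ≠ p + 1)] at H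
  simp only [map_zero, zero_add, add_zero, cast₁_eq, cast₂_eq, cst_cst, cst_id,
    d₁_cst R X d₁, d₂_cst R X d₂] at H
  rw [← map_add] at H
  rw [cst_eq_zero_iff] at H
  exact H

end Aux

/-- Let `X^{p,q}` be a grid of `R`-modules with `R`-linear maps `d₁ : X^{p,q} → X^{p+1,q}`
and `d₂ : X^{p,q} → X^{p,q+1}` such that `d₁ ∘ d₁ = 0` and such that the total map
`d = d₁ + d₂` on the product-totalization squares to zero.  If every row `(X^{•,q}, d₁)` is
acyclic (exact at every spot) and all nonzero components lie in the upper half-plane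
(`X^{p,q} = 0` for `q < 0`), then the total complex is acyclic. -/
theorem almost_double_complex_acyclic_of_rows_acyclic_of_upper_half_plane
    (R : Type) [Ring R]
    (X : ℤ → ℤ → Type) [∀ p q, AddCommGroup (X p q)] [∀ p q, Module R (X p q)]
    (d₁ : ∀ p q : ℤ, X p q →ₗ[R] X (p + 1) q)
    (d₂ : ∀ p q : ℤ, X p q →ₗ[R] X p (q + 1))
    (hd₁ : ∀ p q : ℤ, (d₁ (p + 1) q).comp (d₁ p q) = 0)
    (hdd : ∀ (n : ℤ) (x : Tot X n), totD R X d₁ d₂ (n + 1) (totD R X d₁ d₂ n x) = 0)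
    -- every row `(X^{•,q}, d₁)` is acyclic (exact at every spot):
    (hexact : ∀ (p q : ℤ) (v : X (p + 1) q), d₁ (p + 1) q v = 0 →
      ∃ w : X p q, d₁ p q w = v)
    -- `X^{p,q} = 0` for `q < 0`:
    (hvanish : ∀ p q : ℤ, q < 0 → Subsingleton (X p q)) :
    -- the total complex is acyclic:
    ∀ (n : ℤ) (x : Tot X (n + 1)), totD R X d₁ d₂ (n + 1) x = 0 →
      ∃ y : Tot X n, totD R X d₁ d₂ n y = x := by
  classical
  intro n x h0
  have hdd2 := d₂_d₂ R X d₁ d₂ hdd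
  have hanti : ∀ (p q : ℤ) (v : X p q),
      d₁ p (q + 1) (d₂ p q v) = - d₂ (p + 1) q (d₁ p q v) :=
    fun p q v => eq_neg_of_add_eq_zero_left (d₁_d₂ R X d₁ d₂ hdd p q v)
  -- casting lemma for x
  have hxc : ∀ (a b : ℤ) (h : a = b) (h2 : n + 1 - a = n + 1 - b),
      x b = cst R X h h2 (x a) := by
    intro a b h h2; subst h; rfl
  -- the cocycle condition, componentwise
  have hx0 : ∀ p : ℤ, d₁ (p - 1) (n + 1 - (p - 1)) (x (p - 1)) =
      cst R X (by omega) (by omega) (- d₂ p (n + 1 - p) (x p)) := by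
    intro p
    have H : totD R X d₁ d₂ (n + 1) x p = 0 := congrFun h0 p
    simp only [totD, cast₁_eq, cast₂_eq, cst_cst, cst_id] at H
    rw [add_eq_zero_iff_eq_neg, ← map_neg] at H
    rw [cst_eq_cst_iff] at H
    exact H
  -- choice function for the staircase
  set step : ∀ (p q : ℤ), X (p + 1) q → X p q :=
    fun p q t => if h : ∃ w, d₁ p q w = t then h.choose else 0 with hstep
  have step_spec : ∀ (p q : ℤ) (t : X (p + 1) q), d₁ (p + 1) q t = 0 →
      d₁ p q (step p q t) = t := by
    intro p q t ht
    have h : ∃ w, d₁ p q w = t := hexact p q t ht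
    rw [hstep]; dsimp only
    rw [dif_pos h]
    exact h.choose_spec
  -- the staircase sequence
  obtain ⟨Y, hY0, hYs⟩ : ∃ Y : ∀ k : ℕ, X (n + 1 - (k : ℤ)) ((k : ℤ) - 1),
      Y 0 = 0 ∧ ∀ k : ℕ, Y (k + 1) = step (n + 1 - ((k + 1 : ℕ) : ℤ)) (((k + 1 : ℕ) : ℤ) - 1)
        (cst R X (by push_cast; omega) (by push_cast; omega) (x (n + 1 - (k : ℤ))) -
         cst R X (by push_cast; omega) (by push_cast; omega)
           (d₂ (n + 1 - (k : ℤ)) ((k : ℤ) - 1) (Y k))) := by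
    refine ⟨fun k => Nat.rec (motive := fun k => X (n + 1 - (k : ℤ)) ((k : ℤ) - 1)) 0
      (fun k Yk => step (n + 1 - ((k + 1 : ℕ) : ℤ)) (((k + 1 : ℕ) : ℤ) - 1)
        (cst R X (by push_cast; omega) (by push_cast; omega) (x (n + 1 - (k : ℤ))) -
         cst R X (by push_cast; omega) (by push_cast; omega)
           (d₂ (n + 1 - (k : ℤ)) ((k : ℤ) - 1) Yk))) k, rfl, fun k => rfl⟩
  have hYc : ∀ (a b : ℕ) (h : a = b) (h1 : n + 1 - (a : ℤ) = n + 1 - (b : ℤ))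
      (h2 : (a : ℤ) - 1 = (b : ℤ) - 1), Y b = cst R X h1 h2 (Y a) := by
    intro a b h h1 h2; subst h; rfl
  -- the key invariant
  have key : ∀ k : ℕ, d₁ (n + 1 - ((k + 1 : ℕ) : ℤ)) (((k + 1 : ℕ) : ℤ) - 1) (Y (k + 1)) =
      cst R X (by push_cast; omega) (by push_cast; omega) (x (n + 1 - (k : ℤ))) -
      cst R X (by push_cast; omega) (by push_cast; omega)
        (d₂ (n + 1 - (k : ℤ)) ((k : ℤ) - 1) (Y k)) := by
    intro k
    induction k with
    | zero =>
      rw [hYs 0]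
      apply step_spec
      have hx2 : x (n + 2) = 0 :=
        @Subsingleton.elim _ (hvanish (n + 2) (n + 1 - (n + 2)) (by omega)) _ _
      have h1 := hx0 (n + 2)
      rw [hx2, map_zero, neg_zero, map_zero] at h1
      rw [hY0]
      rw [hxc (n + 2 - 1) (n + 1 - ((0 : ℕ) : ℤ)) (by push_cast; omega) (by push_cast; omega)]
      simp only [map_sub, map_zero, sub_zero, d₁_cst R X d₁, d₂_cst R X d₂, cst_cst,
        cst_eq_zero_iff, h1]
    | succ k ih =>
      rw [hYs (k + 1)]
      apply step_spec
      simp only [map_sub, d₁_cst R X d₁, cst_cst]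
      rw [hanti (n + 1 - ((k + 1 : ℕ) : ℤ)) (((k + 1 : ℕ) : ℤ) - 1) (Y (k + 1))]
      rw [ih]
      rw [hxc (n + 1 - ((k : ℕ) : ℤ) - 1) (n + 1 - ((k + 1 : ℕ) : ℤ))
        (by push_cast; omega) (by push_cast; omega)]
      simp only [d₁_cst R X d₁, cst_cst]
      rw [hx0 (n + 1 - ((k : ℕ) : ℤ))]
      simp only [map_sub, map_neg, d₂_cst R X d₂, cst_cst, hdd2, map_zero, sub_zero,
        d₁_cst R X d₁, neg_neg, neg_sub, cst_eq_zero_iff]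
      abel
  -- the candidate preimage
  refine ⟨fun p => if h : p ≤ n + 1 then
      cst R X (by omega) (by omega) (Y (n + 1 - p).toNat) else 0, ?_⟩
  funext p
  by_cases hp : p ≤ n + 1
  · simp only [totD]
    rw [dif_pos (show p - 1 ≤ n + 1 by omega), dif_pos hp]
    rw [hYc ((n + 1 - p).toNat + 1) (n + 1 - (p - 1)).toNat (by omega)
      (by push_cast; omega) (by push_cast; omega)]
    simp only [cast₁_eq, cast₂_eq, cst_cst, d₁_cst R X d₁, d₂_cst R X d₂]
    rw [key ((n + 1 - p).toNat)]
    rw [hxc (n + 1 - (((n + 1 - p).toNat : ℕ) : ℤ)) p (by omega) (by omega)]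
    simp only [map_sub, cst_cst]
    rw [sub_add_cancel]
  · exact @Subsingleton.elim _ (hvanish p (n + 1 - p) (by omega)) _ _
end
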